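/- Let a,b,c,d ∈ ℝ⁴ with |a|=|c|, |b|=|d|, ⟨a,b⟩=⟨c,d⟩, ⟨a,c⟩=⟨b,d⟩=0, ⟨a,d⟩+⟨b,c⟩=0, and λ ≠ 0. Let X(r,φ) = (a r + λb/r) cos φ + (c r - λd/r) sin φ and suppose for two distinct positive radii r₊ ≠ r₋ one has |X(r_±, φ)| = 1 for all φ. Then |a|² r_±² + λ²|b|²/r_±² = 1 and ⟨a,d⟩ = ⟨b,c⟩ = ⟨a,b⟩ = ⟨c,d⟩ = 0. -/

import Mathlib

set_option maxHeartbeats 1000000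


/-- `X(r,φ) = (a r + λ b / r) cos φ + (c r - λ d / r) sin φ` in ℝ⁴. -/
noncomputable def Y (a b c d : EuclideanSpace ℝ (Fin 4)) (lam r φ : ℝ) :
    EuclideanSpace ℝ (Fin 4) :=
  Real.cos φ • (r • a + (lam / r) • b) + Real.sin φ • (r • c - (lam / r) • d)

lemma key (a b c d : EuclideanSpace ℝ (Fin 4)) (lam r : ℝ) (hr : 0 < r)
    (hU : ∀ φ : ℝ, ‖Y a b c d lam r φ‖ = 1) :
    (r^2*‖a‖^2 + 2*lam*(inner ℝ a b) + lam^2*‖b‖^2/r^2 = 1) ∧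
    (r^2*‖c‖^2 - 2*lam*(inner ℝ c d) + lam^2*‖d‖^2/r^2 = 1) ∧
    (r^2*(inner ℝ a c) - lam*(inner ℝ a d) + lam*(inner ℝ b c)
      - lam^2/r^2*(inner ℝ b d) = 0) := by
  set u := r • a + (lam / r) • b with hu
  set v := r • c - (lam / r) • d with hv
  have h0 : ‖u‖ = 1 := by
    have := hU 0
    simpa [Y, hu, hv] using this
  have h1 : ‖v‖ = 1 := by
    have := hU (Real.pi / 2)
    simpa [Y, hu, hv] using this
  have h2 : (inner ℝ u v) = 0 := by
    have h := hU (Real.pi / 4)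
    rw [show Y a b c d lam r (Real.pi/4) = (Real.sqrt 2 / 2) • (u + v) by
      simp [Y, hu, hv, Real.cos_pi_div_four, Real.sin_pi_div_four, smul_add]] at h
    rw [norm_smul] at h
    have hs2 : (0:ℝ) < Real.sqrt 2 := by positivity
    have huv : ‖u + v‖ = Real.sqrt 2 := by
      rw [Real.norm_eq_abs, abs_of_pos (by positivity)] at h
      field_simp at h
      nlinarith [Real.sq_sqrt (by norm_num : (2:ℝ) ≥ 0), norm_nonneg (u+v)]
    have := norm_add_sq_real u v
    rw [huv, h0, h1] at this
    nlinarith [Real.sq_sqrt (by norm_num : (2:ℝ) ≥ 0)]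
  have hr' : r ≠ 0 := ne_of_gt hr
  have e0 : ‖u‖^2 = 1 := by rw [h0]; norm_num
  rw [hu, norm_add_sq_real, norm_smul, norm_smul, real_inner_smul_left,
    real_inner_smul_right, Real.norm_eq_abs, Real.norm_eq_abs] at e0
  have e1 : ‖v‖^2 = 1 := by rw [h1]; norm_num
  rw [hv, norm_sub_sq_real, norm_smul, norm_smul, real_inner_smul_left,
    real_inner_smul_right, Real.norm_eq_abs, Real.norm_eq_abs] at e1
  rw [hu, hv] at h2
  simp only [inner_add_left, inner_sub_right, real_inner_smul_left,
    real_inner_smul_right] at h2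
  have hlr : |lam / r| ^ 2 = lam^2 / r^2 := by
    rw [sq_abs, div_pow]
  have hrr : |r| ^ 2 = r^2 := sq_abs r
  set q1 := (inner ℝ a c) with hq1
  set q2 := (inner ℝ a d) with hq2
  set q3 := (inner ℝ b c) with hq3
  set q4 := (inner ℝ b d) with hq4
  set p1 := (inner ℝ a b) with hp1
  set p2 := (inner ℝ c d) with hp2
  clear_value q1 q2 q3 q4 p1 p2
  refine ⟨?_, ?_, ?_⟩
  · rw [mul_pow, mul_pow, hlr, hrr] at e0
    field_simp at e0 ⊢
    nlinarith [e0]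
  · rw [mul_pow, mul_pow, hlr, hrr] at e1
    field_simp at e1 ⊢
    nlinarith [e1]
  · field_simp at h2 ⊢
    nlinarith [h2]

theorem stmt8 (a b c d : EuclideanSpace ℝ (Fin 4)) (lam : ℝ) (hlam : lam ≠ 0)
    (hac : ‖a‖ = ‖c‖) (hbd : ‖b‖ = ‖d‖) (hab : (inner ℝ a b) = (inner ℝ c d))
    (hac0 : (inner ℝ a c) = 0) (hbd0 : (inner ℝ b d) = 0)
    (hadbc : (inner ℝ a d) + (inner ℝ b c) = 0)
    (rp rm : ℝ) (hrp : 0 < rp) (hrm : 0 < rm) (hne : rp ≠ rm)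
    (hUp : ∀ φ : ℝ, ‖Y a b c d lam rp φ‖ = 1)
    (hUm : ∀ φ : ℝ, ‖Y a b c d lam rm φ‖ = 1) :
    (‖a‖ ^ 2 * rp ^ 2 + lam ^ 2 * ‖b‖ ^ 2 / rp ^ 2 = 1) ∧
    (‖a‖ ^ 2 * rm ^ 2 + lam ^ 2 * ‖b‖ ^ 2 / rm ^ 2 = 1) ∧
    (inner ℝ a d) = 0 ∧ (inner ℝ b c) = 0 ∧
    (inner ℝ a b) = 0 ∧ (inner ℝ c d) = 0 := by
  obtain ⟨ep1, ep2, ep3⟩ := key a b c d lam rp hrp hUp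
  obtain ⟨em1, em2, em3⟩ := key a b c d lam rm hrm hUm
  rw [← hac, ← hbd, ← hab] at ep2 em2
  have hab0 : (inner ℝ a b) = 0 := by
    have : 4 * lam * (inner ℝ a b) = 0 := by linarith
    rcases mul_eq_zero.mp this with h | h
    · exact absurd (by linarith) hlam
    · exact h
  rw [hac0, hbd0] at ep3
  have had : (inner ℝ a d) = 0 := by
    have h3 : lam * ((inner ℝ b c) - (inner ℝ a d)) = 0 := by ring_nf; ring_nf at ep3; linarith
    rcases mul_eq_zero.mp h3 with h | h
    · exact absurd h hlam
    · linarith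
  refine ⟨?_, ?_, had, by linarith, hab0, by rw [← hab]; exact hab0⟩
  · rw [hab0] at ep1; linarith
  · rw [hab0] at em1; linarith
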